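/- arXiv:1206.4483 — 2 statements merged into one kernel-verified Lean document; each statement's English description precedes it below -/
import Mathlib

section
/- Let r ∈ (0,1), s = sqrt(1 - r^2), and for natural numbers (k,l) ≠ (0,0) define E(k,l;r) to have the same sign as k^2 s^2 + l^2 r^2 - 1. Then E(k,l;r) ≥ 0 for all (k,l) ≠ (0,0) if and only if r ∈ [1/2, sqrt(3)/2]. -/
/-- Eigenvalue of the stability operator `L_r` at the Clifford torus on the
Fourier mode `A_{k,l}`. -/
noncomputable def cliffordEigenvalue (r s : ℝ) (k l : ℕ) : ℝ :=
  (((k : ℝ) ^ 4 - (k : ℝ) ^ 2) * s ^ 4 + ((l : ℝ) ^ 4 - (l : ℝ) ^ 2) * r ^ 4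
      + 2 * (k : ℝ) ^ 2 * (l : ℝ) ^ 2 * r ^ 2 * s ^ 2)
    * ((k : ℝ) ^ 2 * s ^ 2 + (l : ℝ) ^ 2 * r ^ 2 - 1)
    / (r ^ 4 * s ^ 4 * ((k : ℝ) ^ 2 * s ^ 2 + (l : ℝ) ^ 2 * r ^ 2))

set_option maxHeartbeats 1000000 in
theorem stmt_7 (r : ℝ) (hr : r ∈ Set.Ioo (0 : ℝ) 1) (s : ℝ)
    (hs : s = Real.sqrt (1 - r ^ 2)) :
    (∀ k l : ℕ, ¬(k = 0 ∧ l = 0) → 0 ≤ cliffordEigenvalue r s k l) ↔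
      r ∈ Set.Icc (1 / 2 : ℝ) (Real.sqrt 3 / 2) := by
  obtain ⟨hr0, hr1⟩ := hr
  have hs2 : s ^ 2 = 1 - r ^ 2 := by
    rw [hs, Real.sq_sqrt]; nlinarith
  have hspos : 0 < s := by
    rw [hs]; exact Real.sqrt_pos.mpr (by nlinarith)
  have hsqrt3 : (Real.sqrt 3) ^ 2 = 3 := Real.sq_sqrt (by norm_num)
  have hsqrt3n : 0 ≤ Real.sqrt 3 := Real.sqrt_nonneg 3
  constructor
  · intro h
    have h1 := h 2 0 (by simp)
    have h2 := h 0 2 (by simp)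
    unfold cliffordEigenvalue at h1 h2
    push_cast at h1 h2
    have hd1 : (0:ℝ) < r ^ 4 * s ^ 4 * ((2:ℝ) ^ 2 * s ^ 2 + (0:ℝ) ^ 2 * r ^ 2) := by
      positivity
    have hd2 : (0:ℝ) < r ^ 4 * s ^ 4 * ((0:ℝ) ^ 2 * s ^ 2 + (2:ℝ) ^ 2 * r ^ 2) := by
      positivity
    have hn1 := (le_div_iff₀ hd1).mp h1
    have hn2 := (le_div_iff₀ hd2).mp h2
    have hs4 : 0 < s ^ 4 := by positivity
    have hub2 : r ^ 2 ≤ 3 / 4 := by nlinarith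
    have hlb2 : 1 / 4 ≤ r ^ 2 := by nlinarith
    constructor
    · nlinarith
    · by_contra hcon
      push_neg at hcon
      nlinarith
  · rintro ⟨hlo, hhi⟩ k l hkl
    have hub2 : r ^ 2 ≤ 3 / 4 := by nlinarith
    have hlb2 : 1 / 4 ≤ r ^ 2 := by nlinarith
    have hslb : 1 / 4 ≤ s ^ 2 := by nlinarith
    unfold cliffordEigenvalue
    have hT : 0 < (k : ℝ) ^ 2 * s ^ 2 + (l : ℝ) ^ 2 * r ^ 2 := by
      rcases Nat.eq_zero_or_pos k with hk | hk
      · have hl0 : l ≠ 0 := by tauto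
        have hL : (1:ℝ) ≤ (l:ℝ) := by exact_mod_cast Nat.one_le_iff_ne_zero.mpr hl0
        subst hk; push_cast; nlinarith
      · have hK : (1:ℝ) ≤ (k:ℝ) := by exact_mod_cast hk
        nlinarith
    apply div_nonneg _ (le_of_lt (mul_pos (by positivity) hT))
    have hk4 : (k:ℝ) ^ 2 ≤ (k:ℝ) ^ 4 := by
      rcases Nat.eq_zero_or_pos k with h | h
      · simp [h]
      · have h1 : (1:ℝ) ≤ (k:ℝ) := by exact_mod_cast h
        have h2 : (1:ℝ) ≤ (k:ℝ) ^ 2 := by nlinarith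
        nlinarith [mul_nonneg (sq_nonneg (k:ℝ)) (sub_nonneg.2 h2)]
    have hl4 : (l:ℝ) ^ 2 ≤ (l:ℝ) ^ 4 := by
      rcases Nat.eq_zero_or_pos l with h | h
      · simp [h]
      · have h1 : (1:ℝ) ≤ (l:ℝ) := by exact_mod_cast h
        have h2 : (1:ℝ) ≤ (l:ℝ) ^ 2 := by nlinarith
        nlinarith [mul_nonneg (sq_nonneg (l:ℝ)) (sub_nonneg.2 h2)]
    have hN : 0 ≤ ((k : ℝ) ^ 4 - (k : ℝ) ^ 2) * s ^ 4 + ((l : ℝ) ^ 4 - (l : ℝ) ^ 2) * r ^ 4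
        + 2 * (k : ℝ) ^ 2 * (l : ℝ) ^ 2 * r ^ 2 * s ^ 2 := by
      have t1 : (0:ℝ) ≤ ((k : ℝ) ^ 4 - (k : ℝ) ^ 2) * s ^ 4 :=
        mul_nonneg (by linarith) (by positivity)
      have t2 : (0:ℝ) ≤ ((l : ℝ) ^ 4 - (l : ℝ) ^ 2) * r ^ 4 :=
        mul_nonneg (by linarith) (by positivity)
      have t3 : (0:ℝ) ≤ 2 * (k : ℝ) ^ 2 * (l : ℝ) ^ 2 * r ^ 2 * s ^ 2 := by positivity
      linarith
    have key : 2 * r ^ 2 * s ^ 2 * (s ^ 2 + r ^ 2 - 1) = 0 := by rw [hs2]; ring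
    rcases Nat.lt_or_ge k 2 with hk2 | hk2
    · rcases Nat.lt_or_ge l 2 with hl2 | hl2
      · -- small cases k,l ∈ {0,1}
        interval_cases k <;> interval_cases l <;> push_cast <;>
          first
          | (exfalso; exact hkl ⟨rfl, rfl⟩)
          | nlinarith [key]
      · -- l ≥ 2
        have hL : (2:ℝ) ≤ (l:ℝ) := by exact_mod_cast hl2
        have hT1 : 1 ≤ (k : ℝ) ^ 2 * s ^ 2 + (l : ℝ) ^ 2 * r ^ 2 := by nlinarith
        exact mul_nonneg hN (by linarith)
    · -- k ≥ 2
      have hK : (2:ℝ) ≤ (k:ℝ) := by exact_mod_cast hk2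
      have hT1 : 1 ≤ (k : ℝ) ^ 2 * s ^ 2 + (l : ℝ) ^ 2 * r ^ 2 := by nlinarith
      exact mul_nonneg hN (by linarith)
end

section
/- Let r, s > 0 with r^2 + s^2 = 1 and let k, l be natural numbers, not both zero. Plugging the Fourier mode eigenvalues into the stability operator: ((k^2 s^2 + l^2 r^2)^2/(r^4 s^4) - (k^2 s^2 + l^2 r^2)/(r^4 s^4) - k^2/r^4 - l^2/s^4 + 1/(2 r^4 s^4) - (r^2-s^2)(k^2 s^2 - l^2 r^2)/(2 r^4 s^4 (k^2 s^2 + l^2 r^2))) equals ((k^4 - k^2) s^4 + (l^4 - l^2) r^4 + 2 k^2 l^2 r^2 s^2)(k^2 s^2 + l^2 r^2 - 1)/(r^4 s^4 (k^2 s^2 + l^2 r^2)). -/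
theorem stmt_19 (r s : ℝ) (hr : 0 < r) (hs : 0 < s) (h : r ^ 2 + s ^ 2 = 1)
    (k l : ℕ) (hkl : ¬(k = 0 ∧ l = 0)) :
    ((k : ℝ) ^ 2 * s ^ 2 + (l : ℝ) ^ 2 * r ^ 2) ^ 2 / (r ^ 4 * s ^ 4)
      - ((k : ℝ) ^ 2 * s ^ 2 + (l : ℝ) ^ 2 * r ^ 2) / (r ^ 4 * s ^ 4)
      - (k : ℝ) ^ 2 / r ^ 4 - (l : ℝ) ^ 2 / s ^ 4 + 1 / (2 * r ^ 4 * s ^ 4)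
      - (r ^ 2 - s ^ 2) * ((k : ℝ) ^ 2 * s ^ 2 - (l : ℝ) ^ 2 * r ^ 2) /
          (2 * r ^ 4 * s ^ 4 * ((k : ℝ) ^ 2 * s ^ 2 + (l : ℝ) ^ 2 * r ^ 2))
    = (((k : ℝ) ^ 4 - (k : ℝ) ^ 2) * s ^ 4 + ((l : ℝ) ^ 4 - (l : ℝ) ^ 2) * r ^ 4
          + 2 * (k : ℝ) ^ 2 * (l : ℝ) ^ 2 * r ^ 2 * s ^ 2)
        * ((k : ℝ) ^ 2 * s ^ 2 + (l : ℝ) ^ 2 * r ^ 2 - 1)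
        / (r ^ 4 * s ^ 4 * ((k : ℝ) ^ 2 * s ^ 2 + (l : ℝ) ^ 2 * r ^ 2)) := by
  have hr2 : (0:ℝ) < r ^ 2 := by positivity
  have hs2p : (0:ℝ) < s ^ 2 := by positivity
  have hQ : (0:ℝ) < (k : ℝ) ^ 2 * s ^ 2 + (l : ℝ) ^ 2 * r ^ 2 := by
    rcases Classical.em (k = 0) with hk | hk
    · have hl : l ≠ 0 := fun hl => hkl ⟨hk, hl⟩
      have hl1 : (1:ℝ) ≤ (l : ℝ) ^ 2 := by
        have : (1:ℕ) ≤ l := Nat.one_le_iff_ne_zero.mpr hl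
        have : (1:ℝ) ≤ (l : ℝ) := by exact_mod_cast this
        nlinarith
      nlinarith
    · have hk1 : (1:ℝ) ≤ (k : ℝ) ^ 2 := by
        have : (1:ℕ) ≤ k := Nat.one_le_iff_ne_zero.mpr hk
        have : (1:ℝ) ≤ (k : ℝ) := by exact_mod_cast this
        nlinarith
      nlinarith
  have hs2 : s ^ 2 = 1 - r ^ 2 := by linarith
  have hs4 : s ^ 4 = (1 - r ^ 2) ^ 2 := by rw [show s ^ 4 = (s ^ 2) ^ 2 by ring, hs2]
  rw [hs2] at hQ
  rw [hs2, hs4]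
  have h1 : (1:ℝ) - r ^ 2 ≠ 0 := by rw [← hs2]; positivity
  have hQ' : (k : ℝ) ^ 2 * (1 - r ^ 2) + (l : ℝ) ^ 2 * r ^ 2 ≠ 0 := ne_of_gt hQ
  have hQ'' : (k : ℝ) ^ 2 * (1 - r ^ 2) + r ^ 2 * (l : ℝ) ^ 2 ≠ 0 := by rw [mul_comm (r ^ 2)]; exact hQ'
  field_simp
  ring
end
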